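/- Let V be a finite nonempty type, p : V → ℝ a probability mass function with full support, g : V → ℝ, α > 0, and let P*(v) = p(v)·exp(g(v)/α)/Σ_w p(w)·exp(g(w)/α) be the tilted distribution. Set η = KL(P*,p). Then E_{P*}[g] = Σ_v P*(v)·g(v) is the greatest element of the set { Σ_v q(v)·g(v) : q a probability mass function on V with KL(q,p) ≤ η }. That is, the worst-case distribution of the KL-ball DRO problem of radius KL(P*,p) around p is exactly the tilted distribution P*, matching the closed form P*(v) = p(v)·exp(g(v)/α)/E_{w∼p}[exp(g(w)/α)]. -/

import Mathlib

/-- The worst-case distribution of the KL-ball DRO problem of radius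
`η = KL(P*,p)` around `p` is exactly the tilted distribution
`P*(v) = p(v)·exp(g(v)/α)/E_{w∼p}[exp(g(w)/α)]`: its expected loss `E_{P*}[g]` is
the greatest element of `{ E_q[g] : q pmf, KL(q,p) ≤ η }`. -/
theorem tilted_distribution_is_worst_case
    {V : Type*} [Fintype V] [Nonempty V]
    (p : V → ℝ) (hp_pos : ∀ v, 0 < p v) (hp_sum : ∑ v, p v = 1)
    (g : V → ℝ) (α : ℝ) (hα : 0 < α) :
    let Z : ℝ := ∑ w, p w * Real.exp (g w / α)
    let Pstar : V → ℝ := fun v => p v * Real.exp (g v / α) / Z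
    let η : ℝ := ∑ v, Pstar v * Real.log (Pstar v / p v)
    IsGreatest
      {s : ℝ | ∃ q : V → ℝ, (∀ v, 0 ≤ q v) ∧ (∑ v, q v = 1) ∧
        (∑ v, q v * Real.log (q v / p v) ≤ η) ∧ s = ∑ v, q v * g v}
      (∑ v, Pstar v * g v) := by
  intro Z Pstar η
  have hZpos : 0 < Z :=
    Finset.sum_pos (fun v _ => mul_pos (hp_pos v) (Real.exp_pos _)) Finset.univ_nonempty
  have hPpos : ∀ v, 0 < Pstar v := fun v =>
    div_pos (mul_pos (hp_pos v) (Real.exp_pos _)) hZpos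
  have hPsum : ∑ v, Pstar v = 1 := by
    show (∑ v, p v * Real.exp (g v / α) / Z) = 1
    rw [← Finset.sum_div]
    exact div_self hZpos.ne'
  have hlogP : ∀ v, Real.log (Pstar v) - Real.log (p v) = g v / α - Real.log Z := by
    intro v
    have h1 : Pstar v / p v = Real.exp (g v / α) / Z := by
      show p v * Real.exp (g v / α) / Z / p v = _
      rw [div_div, mul_comm Z (p v), ← div_div, mul_div_cancel_left₀ _ (hp_pos v).ne']
    have h2 := Real.log_div (hPpos v).ne' (hp_pos v).ne'
    rw [← h2, h1, Real.log_div (Real.exp_pos _).ne' hZpos.ne', Real.log_exp]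
  have hη : α * η + α * Real.log Z = ∑ v, Pstar v * g v := by
    show α * (∑ v, Pstar v * Real.log (Pstar v / p v)) + _ = _
    have hterm : ∀ v ∈ Finset.univ,
        Pstar v * Real.log (Pstar v / p v) = Pstar v * g v / α - Real.log Z * Pstar v := by
      intro v _
      rw [Real.log_div (hPpos v).ne' (hp_pos v).ne', hlogP v]
      field_simp
    rw [Finset.sum_congr rfl hterm, Finset.sum_sub_distrib, ← Finset.mul_sum, hPsum,
      ← Finset.sum_div]
    field_simp
    ring
  constructor
  · exact ⟨Pstar, fun v => (hPpos v).le, hPsum, le_refl _, rfl⟩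
  · rintro s ⟨q, hq0, hq1, hqKL, rfl⟩
    have hterm : ∀ v ∈ Finset.univ,
        q v * g v - α * (q v * Real.log (q v / p v))
          ≤ α * (Pstar v - q v) + α * Real.log Z * q v := by
      intro v _
      rcases eq_or_lt_of_le (hq0 v) with h | h
      · simp only [← h, zero_mul, mul_zero, sub_zero, sub_zero, add_zero]
        have := mul_nonneg hα.le (hPpos v).le
        nlinarith
      · have hlq : Real.log (q v / p v) = Real.log (q v) - Real.log (p v) :=
          Real.log_div h.ne' (hp_pos v).ne'
        have h2 : Real.log (Pstar v / q v) ≤ Pstar v / q v - 1 :=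
          Real.log_le_sub_one_of_pos (div_pos (hPpos v) h)
        have h3 : Real.log (Pstar v / q v) = Real.log (Pstar v) - Real.log (q v) :=
          Real.log_div (hPpos v).ne' h.ne'
        have h4 : q v * (Real.log (Pstar v) - Real.log (q v)) ≤ Pstar v - q v := by
          have := mul_le_mul_of_nonneg_left h2 (hq0 v)
          rw [h3] at this
          have heq : q v * (Pstar v / q v - 1) = Pstar v - q v := by
            field_simp
          linarith [this, heq ▸ this]
        have hg : g v = α * (Real.log (Pstar v) - Real.log (p v) + Real.log Z) := by
          have := hlogP v
          field_simp at this ⊢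
          linarith
        rw [hlq, hg]
        nlinarith [mul_le_mul_of_nonneg_left h4 hα.le]
    have hsum := Finset.sum_le_sum hterm
    rw [Finset.sum_sub_distrib, ← Finset.mul_sum] at hsum
    have hrhs : ∑ v, (α * (Pstar v - q v) + α * Real.log Z * q v)
        = α * Real.log Z := by
      rw [Finset.sum_add_distrib, ← Finset.mul_sum, ← Finset.mul_sum,
        Finset.sum_sub_distrib, hPsum, hq1]
      ring
    rw [hrhs] at hsum
    have hKL : α * (∑ v, q v * Real.log (q v / p v)) ≤ α * η :=
      mul_le_mul_of_nonneg_left hqKL hα.le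
    linarith [hη]
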